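/- Let p be an odd prime, d an integer with p ∤ d, and z an integer with z² ≡ d (mod p). Let α ∈ ℤ_p be the square root of d with α ≡ z (mod p), and let a_n ≡ α (mod p^{n+1}) be its truncations. Then D_{n+1}(d,z) is a p-adic unit and a_n ≡ N_{n+1}(d,z)/D_{n+1}(d,z) (mod p^{n+1}) for all n ≥ 0, i.e., Q_{n+1}(d,z) agrees with α modulo p^{n+1} in ℤ_p. -/
import Mathlib

/-- Rédei polynomial `N_n(d,z)` over the integers. -/
def redeiN (d z : ℤ) (n : ℕ) : ℤ :=
  ∑ i ∈ Finset.range (n / 2 + 1), (n.choose (2 * i) : ℤ) * d ^ i * z ^ (n - 2 * i)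

/-- Rédei polynomial `D_n(d,z)` over the integers. -/
def redeiD (d z : ℤ) (n : ℕ) : ℤ :=
  ∑ i ∈ Finset.range (n / 2 + 1), (n.choose (2 * i + 1) : ℤ) * d ^ i * z ^ (n - 2 * i - 1)

lemma my_sum_range_two_mul {M : Type*} [AddCommMonoid M] (g : ℕ → M) (m : ℕ) :
    ∑ k ∈ Finset.range (2 * m), g k =
      ∑ i ∈ Finset.range m, g (2 * i) + ∑ i ∈ Finset.range m, g (2 * i + 1) := by
  induction m with
  | zero => simp
  | succ m ih =>
      rw [mul_add, mul_one, show 2 * m + 2 = (2 * m + 1) + 1 from rfl,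
        Finset.sum_range_succ, Finset.sum_range_succ, ih,
        Finset.sum_range_succ, Finset.sum_range_succ]
      abel

lemma redei_key {R : Type*} [CommRing R] (d z : ℤ) (x : R) (hx : x ^ 2 = (d : R)) (n : ℕ) :
    ((z : R) + x) ^ n = (redeiN d z n : R) + (redeiD d z n : R) * x := by
  rw [add_comm, add_pow]
  have hsub : Finset.range (n + 1) ⊆ Finset.range (2 * (n / 2 + 1)) :=
    Finset.range_subset_range.2 (by omega)
  rw [Finset.sum_subset hsub (by
    intro k hk hk'
    have hk2 : n < k := by
      simp only [Finset.mem_range] at hk hk'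
      omega
    simp [Nat.choose_eq_zero_of_lt hk2])]
  rw [my_sum_range_two_mul]
  congr 1
  · push_cast [redeiN]
    refine Finset.sum_congr rfl fun i _ => ?_
    rw [pow_mul, hx]
    ring
  · push_cast [redeiD, Finset.sum_mul]
    refine Finset.sum_congr rfl fun i _ => ?_
    rw [pow_succ, pow_mul, hx, ← Nat.sub_sub]
    ring

theorem redei_padic_truncation (p : ℕ) [Fact p.Prime] (hodd : Odd p) (d z : ℤ)
    (hd : ¬ (p : ℤ) ∣ d) (hz : z ^ 2 ≡ d [ZMOD (p : ℤ)])
    (α : ℤ_[p]) (hα : α ^ 2 = (d : ℤ_[p])) (hαz : (p : ℤ_[p]) ∣ (α - (z : ℤ_[p])))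
    (a : ℕ → ℤ) (htrunc : ∀ n : ℕ, ((p : ℤ_[p]) ^ (n + 1)) ∣ ((a n : ℤ_[p]) - α)) :
    ∀ n : ℕ, IsUnit ((redeiD d z (n + 1) : ℤ_[p])) ∧
      ((p : ℤ_[p]) ^ (n + 1)) ∣
        ((a n : ℤ_[p]) * (redeiD d z (n + 1) : ℤ_[p]) - (redeiN d z (n + 1) : ℤ_[p])) := by
  intro n
  set N : ℤ_[p] := (redeiN d z (n + 1) : ℤ_[p]) with hN
  set D : ℤ_[p] := (redeiD d z (n + 1) : ℤ_[p]) with hD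
  have h2 : ((z : ℤ_[p]) - α) ^ (n + 1) = N - D * α := by
    have := redei_key d z (-α) (by rw [neg_pow, hα]; ring) (n + 1)
    rw [hN, hD]
    rw [sub_eq_add_neg, this]
    ring
  have hpza : (p : ℤ_[p]) ∣ ((z : ℤ_[p]) - α) := by
    rw [← neg_sub]; exact dvd_neg.mpr hαz
  have hND : ((p : ℤ_[p]) ^ (n + 1)) ∣ (N - D * α) := by
    rw [← h2]; exact pow_dvd_pow_of_dvd hpza (n + 1)
  constructor
  · -- D is a unit: show p ∤ redeiD over ℤ, via ZMod p
    have hz' : ((z : ZMod p)) ^ 2 = (d : ZMod p) := by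
      have := (ZMod.intCast_eq_intCast_iff _ _ _).mpr hz
      push_cast at this
      exact this
    have hzne : (z : ZMod p) ≠ 0 := by
      intro h
      apply hd
      rw [← ZMod.intCast_zmod_eq_zero_iff_dvd, ← hz', h]
      ring
    have h2ne : (2 : ZMod p) ≠ 0 := by
      have h2 : ((2 : ℕ) : ZMod p) ≠ 0 := by
        rw [Ne, ZMod.natCast_eq_zero_iff]
        intro h
        have := (Nat.prime_dvd_prime_iff_eq Fact.out Nat.prime_two).mp h
        rcases hodd with ⟨k, hk⟩
        omega
      simpa using h2
    have key1 : ((z : ZMod p) + (z : ZMod p)) ^ (n + 1)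
        = (redeiN d z (n + 1) : ZMod p) + (redeiD d z (n + 1) : ZMod p) * (z : ZMod p) :=
      redei_key d z (z : ZMod p) hz' (n + 1)
    have key2 : (0 : ZMod p)
        = (redeiN d z (n + 1) : ZMod p) - (redeiD d z (n + 1) : ZMod p) * (z : ZMod p) := by
      have := redei_key d z (-(z : ZMod p)) (by rw [neg_pow, hz']; ring) (n + 1)
      simp only [add_neg_cancel, mul_neg] at this
      rw [← sub_eq_add_neg] at this
      rw [← this, zero_pow (Nat.succ_ne_zero n)]
    have hDz : 2 * (redeiD d z (n + 1) : ZMod p) * (z : ZMod p)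
        = (2 : ZMod p) ^ (n + 1) * (z : ZMod p) ^ (n + 1) := by
      have : ((z : ZMod p) + (z : ZMod p)) ^ (n + 1) = (2 : ZMod p) ^ (n+1) * (z : ZMod p) ^ (n+1) := by
        rw [← mul_pow]; ring_nf
      rw [this] at key1
      linear_combination key2 - key1
    have hDne : (redeiD d z (n + 1) : ZMod p) ≠ 0 := by
      intro h
      rw [h] at hDz
      simp only [mul_zero, zero_mul] at hDz
      exact (mul_ne_zero (pow_ne_zero _ h2ne) (pow_ne_zero _ hzne)) hDz.symm
    have hnd : ¬ ((p : ℤ) ∣ redeiD d z (n + 1)) := by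
      rw [← ZMod.intCast_zmod_eq_zero_iff_dvd]
      exact hDne
    rw [PadicInt.isUnit_iff]
    rcases (PadicInt.norm_le_one D).lt_or_eq with h | h
    · exact absurd ((PadicInt.norm_int_lt_one_iff_dvd _).mp h) hnd
    · exact h
  · have heq : (a n : ℤ_[p]) * D - N = ((a n : ℤ_[p]) - α) * D - (N - D * α) := by ring
    rw [heq]
    exact dvd_sub ((htrunc n).mul_right D) hND
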